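/- Let 𝒜 be a measurement operator satisfying the rank-(4r+1) RIP with constant δ ≤ 1, let w ∈ ℝ^{n1}, v ∈ ℝ^{n2} be unit vectors with associated virtual operator 𝒜_{(w,v)}, and set c' := max{δ, 8√(2r(n1+n2)/m)}. Let X⋆, X_t, X' ∈ ℝ^{n1×n2} all have rank r, and let X' have compact SVD X' = V'Σ'(W')ᵀ. Assume the decoupling bound |⟨𝒜(wvᵀ), 𝒜(𝒫_{wvᵀ,⊥}(X⋆ − X'))⟩| ≤ 4√((n1+n2)/m)·‖𝒜(𝒫_{wvᵀ,⊥}(X⋆ − X'))‖₂. Then ‖[(𝒜*𝒜 − 𝒜*_{(w,v)}𝒜_{(w,v)})(X⋆ − X_t)]·W'‖_F ≤ 2c'·(‖X⋆ − X_t‖ + ‖X_t − X'‖_F) and ‖(V')ᵀ·[(𝒜*𝒜 − 𝒜*_{(w,v)}𝒜_{(w,v)})(X⋆ − X_t)]‖_F ≤ 2c'·(‖X⋆ − X_t‖ + ‖X_t − X'‖_F). -/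

import Mathlib

open Matrix MeasureTheory ProbabilityTheory
open scoped BigOperators

noncomputable section

/-- Frobenius inner product `⟨A, B⟩ = trace (Aᵀ * B)`. -/
def frobInner {n1 n2 : ℕ} (A B : Matrix (Fin n1) (Fin n2) ℝ) : ℝ :=
  Matrix.trace (Aᵀ * B)

/-- Frobenius norm of a matrix. -/
def frobNorm {n1 n2 : ℕ} (A : Matrix (Fin n1) (Fin n2) ℝ) : ℝ :=
  Real.sqrt (∑ i, ∑ j, A i j ^ 2)

/-- Spectral (ℓ²-operator) norm of a matrix. -/
def specNorm {n1 n2 : ℕ} (A : Matrix (Fin n1) (Fin n2) ℝ) : ℝ :=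
  ‖LinearMap.toContinuousLinearMap (Matrix.toEuclideanLin A)‖

/-- Euclidean norm of a vector in ℝ^m. -/
def vecNorm {m : ℕ} (v : Fin m → ℝ) : ℝ :=
  Real.sqrt (∑ i, v i ^ 2)

/-- Smallest nonzero singular value of a matrix: the singular values of `X` are the
square roots of the eigenvalues of `Xᴴ * X`. -/
def sigmaMin {n1 n2 : ℕ} (X : Matrix (Fin n1) (Fin n2) ℝ) : ℝ :=
  sInf {s : ℝ | 0 < s ∧ ∃ i : Fin n2,
    s ^ 2 = (Matrix.isHermitian_conjTranspose_mul_self X).eigenvalues i}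

/-- The measurement operator `𝒜(X) i = (1/√m) ⟨A i, X⟩`. -/
def measOp {n1 n2 m : ℕ} (A : Fin m → Matrix (Fin n1) (Fin n2) ℝ)
    (X : Matrix (Fin n1) (Fin n2) ℝ) : Fin m → ℝ :=
  fun i => (Real.sqrt m)⁻¹ * frobInner (A i) X

/-- The adjoint `𝒜*(u) = (1/√m) ∑ i, u i • A i`. -/
def measAdj {n1 n2 m : ℕ} (A : Fin m → Matrix (Fin n1) (Fin n2) ℝ)
    (u : Fin m → ℝ) : Matrix (Fin n1) (Fin n2) ℝ :=
  (Real.sqrt m)⁻¹ • ∑ i, u i • A i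

/-- The composite operator `𝒜*𝒜`. -/
def opAA {n1 n2 m : ℕ} (A : Fin m → Matrix (Fin n1) (Fin n2) ℝ)
    (X : Matrix (Fin n1) (Fin n2) ℝ) : Matrix (Fin n1) (Fin n2) ℝ :=
  measAdj A (measOp A X)

/-- Rank-`k` restricted isometry property with constant `δ`. -/
def HasRIP {n1 n2 m : ℕ} (A : Fin m → Matrix (Fin n1) (Fin n2) ℝ) (k : ℕ) (δ : ℝ) : Prop :=
  ∀ Z : Matrix (Fin n1) (Fin n2) ℝ, Z.rank ≤ k →
    (1 - δ) * frobNorm Z ^ 2 ≤ vecNorm (measOp A Z) ^ 2 ∧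
      vecNorm (measOp A Z) ^ 2 ≤ (1 + δ) * frobNorm Z ^ 2

/-- Compact SVD: `X = V * S * Wᵀ`, `V, W` with orthonormal columns, `S` diagonal with
positive diagonal entries. -/
def IsCompactSVD {n1 n2 r : ℕ} (X : Matrix (Fin n1) (Fin n2) ℝ)
    (V : Matrix (Fin n1) (Fin r) ℝ) (S : Matrix (Fin r) (Fin r) ℝ)
    (W : Matrix (Fin n2) (Fin r) ℝ) : Prop :=
  X = V * S * Wᵀ ∧ Vᵀ * V = 1 ∧ Wᵀ * W = 1 ∧
    (∀ i j, i ≠ j → S i j = 0) ∧ (∀ i, 0 < S i i)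

/-- `Vp` is a matrix whose columns form an orthonormal basis of the orthogonal
complement of the column space of `V` (which has orthonormal columns). -/
def IsOrthComplement {n r : ℕ} (V : Matrix (Fin n) (Fin r) ℝ)
    (Vp : Matrix (Fin n) (Fin (n - r)) ℝ) : Prop :=
  Vpᵀ * Vp = 1 ∧ Vᵀ * Vp = 0

end
noncomputable section

/-- Projection onto the direction `w vᵀ` : `𝒫_{wvᵀ}(Z) = ⟨wvᵀ, Z⟩ wvᵀ`. -/
def projWV {n1 n2 : ℕ} (w : Fin n1 → ℝ) (v : Fin n2 → ℝ)
    (Z : Matrix (Fin n1) (Fin n2) ℝ) : Matrix (Fin n1) (Fin n2) ℝ :=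
  frobInner (Matrix.vecMulVec w v) Z • Matrix.vecMulVec w v

/-- `𝒫_{wvᵀ,⊥}(Z) = Z − ⟨wvᵀ, Z⟩ wvᵀ`. -/
def projWVperp {n1 n2 : ℕ} (w : Fin n1 → ℝ) (v : Fin n2 → ℝ)
    (Z : Matrix (Fin n1) (Fin n2) ℝ) : Matrix (Fin n1) (Fin n2) ℝ :=
  Z - projWV w v Z

/-- The virtual measurement operator `𝒜_{(w,v)} : ℝ^{n1×n2} → ℝ^{m+1}`. -/
def virtOp {n1 n2 m : ℕ} (A : Fin m → Matrix (Fin n1) (Fin n2) ℝ)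
    (w : Fin n1 → ℝ) (v : Fin n2 → ℝ) (Z : Matrix (Fin n1) (Fin n2) ℝ) :
    Fin (m + 1) → ℝ :=
  fun i => if h : (i : ℕ) < m then
      (Real.sqrt m)⁻¹ * frobInner (projWVperp w v (A ⟨(i : ℕ), h⟩)) Z
    else frobInner (Matrix.vecMulVec w v) Z

/-- Adjoint of the virtual measurement operator. -/
def virtAdj {n1 n2 m : ℕ} (A : Fin m → Matrix (Fin n1) (Fin n2) ℝ)
    (w : Fin n1 → ℝ) (v : Fin n2 → ℝ) (u : Fin (m + 1) → ℝ) :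
    Matrix (Fin n1) (Fin n2) ℝ :=
  (Real.sqrt m)⁻¹ • (∑ i : Fin m, u i.castSucc • projWVperp w v (A i))
    + u (Fin.last m) • Matrix.vecMulVec w v

/-- The composite operator `𝒜*_{(w,v)} 𝒜_{(w,v)}`. -/
def virtAA {n1 n2 m : ℕ} (A : Fin m → Matrix (Fin n1) (Fin n2) ℝ)
    (w : Fin n1 → ℝ) (v : Fin n2 → ℝ) (Z : Matrix (Fin n1) (Fin n2) ℝ) :
    Matrix (Fin n1) (Fin n2) ℝ :=
  virtAdj A w v (virtOp A w v Z)

end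
noncomputable section Aux
open scoped RealInnerProductSpace
open Matrix
variable {n1 n2 m r : ℕ}

/-- identity embedding into EuclideanSpace -/
def vecE {n : ℕ} (w : Fin n → ℝ) : EuclideanSpace ℝ (Fin n) := (WithLp.equiv 2 _).symm w

def matE {n1 n2 : ℕ} (A : Matrix (Fin n1) (Fin n2) ℝ) : EuclideanSpace ℝ (Fin n1 × Fin n2) :=
  (WithLp.equiv 2 _).symm (fun p => A p.1 p.2)

lemma vecNorm_eq {n : ℕ} (w : Fin n → ℝ) : vecNorm w = ‖vecE w‖ := by
  rw [EuclideanSpace.norm_eq]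
  simp [vecNorm, vecE, Real.norm_eq_abs, sq_abs]

lemma vecNorm_nonneg {n : ℕ} (w : Fin n → ℝ) : 0 ≤ vecNorm w := Real.sqrt_nonneg _

lemma vecNorm_sq {n : ℕ} (w : Fin n → ℝ) : vecNorm w ^ 2 = ∑ i, w i ^ 2 := by
  rw [vecNorm, Real.sq_sqrt] ; positivity

lemma inner_vecE {n : ℕ} (a b : Fin n → ℝ) : (inner ℝ (vecE a) (vecE b)) = ∑ i, a i * b i := by
  simp [vecE, PiLp.inner_apply, RCLike.inner_apply, conj_trivial, mul_comm]

lemma frobInner_eq_sum (A B : Matrix (Fin n1) (Fin n2) ℝ) :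
    frobInner A B = ∑ i, ∑ j, A i j * B i j := by
  simp only [frobInner, Matrix.trace, Matrix.diag, Matrix.mul_apply, Matrix.transpose_apply]
  exact Finset.sum_comm

lemma frobNorm_eq (A : Matrix (Fin n1) (Fin n2) ℝ) : frobNorm A = ‖matE A‖ := by
  rw [EuclideanSpace.norm_eq]
  simp [frobNorm, matE, Real.norm_eq_abs, sq_abs, Fintype.sum_prod_type]

lemma frobNorm_nonneg (A : Matrix (Fin n1) (Fin n2) ℝ) : 0 ≤ frobNorm A := Real.sqrt_nonneg _

lemma inner_matE (A B : Matrix (Fin n1) (Fin n2) ℝ) : (inner ℝ (matE A) (matE B)) = frobInner A B := by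
  simp [matE, PiLp.inner_apply, RCLike.inner_apply, conj_trivial, frobInner_eq_sum,
    Fintype.sum_prod_type, mul_comm]

lemma matE_add (A B : Matrix (Fin n1) (Fin n2) ℝ) : matE (A + B) = matE A + matE B := rfl
lemma matE_sub (A B : Matrix (Fin n1) (Fin n2) ℝ) : matE (A - B) = matE A - matE B := rfl
lemma matE_smul (c : ℝ) (A : Matrix (Fin n1) (Fin n2) ℝ) : matE (c • A) = c • matE A := rfl

lemma frobNorm_sq (A : Matrix (Fin n1) (Fin n2) ℝ) : frobNorm A ^ 2 = frobInner A A := by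
  rw [frobNorm_eq, ← inner_matE, real_inner_self_eq_norm_sq]

lemma frobNorm_triangle (A B : Matrix (Fin n1) (Fin n2) ℝ) :
    frobNorm (A + B) ≤ frobNorm A + frobNorm B := by
  rw [frobNorm_eq, frobNorm_eq, frobNorm_eq, matE_add]; exact norm_add_le _ _

lemma frobNorm_smul (c : ℝ) (A : Matrix (Fin n1) (Fin n2) ℝ) :
    frobNorm (c • A) = |c| * frobNorm A := by
  rw [frobNorm_eq, frobNorm_eq, matE_smul, norm_smul, Real.norm_eq_abs]

lemma frobNorm_neg (A : Matrix (Fin n1) (Fin n2) ℝ) : frobNorm (-A) = frobNorm A := by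
  simp [frobNorm, neg_pow]

lemma frobNorm_eq_zero {A : Matrix (Fin n1) (Fin n2) ℝ} (h : frobNorm A = 0) : A = 0 := by
  rw [frobNorm_eq, norm_eq_zero] at h
  ext i j
  have := congrFun (congrArg (WithLp.equiv 2 _) h) (i, j)
  simpa [matE] using this

lemma frobInner_comm (A B : Matrix (Fin n1) (Fin n2) ℝ) : frobInner A B = frobInner B A := by
  rw [frobInner, frobInner, ← Matrix.trace_transpose, Matrix.transpose_mul,
    Matrix.transpose_transpose]

lemma frobInner_add_right (X A B : Matrix (Fin n1) (Fin n2) ℝ) :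
    frobInner X (A + B) = frobInner X A + frobInner X B := by
  simp [frobInner, Matrix.mul_add]

lemma frobInner_sub_right (X A B : Matrix (Fin n1) (Fin n2) ℝ) :
    frobInner X (A - B) = frobInner X A - frobInner X B := by
  simp [frobInner, Matrix.mul_sub]

lemma frobInner_smul_right (c : ℝ) (X A : Matrix (Fin n1) (Fin n2) ℝ) :
    frobInner X (c • A) = c * frobInner X A := by
  simp [frobInner, Matrix.mul_smul]

lemma frobInner_sum_right {ι : Type*} (s : Finset ι) (X : Matrix (Fin n1) (Fin n2) ℝ)
    (f : ι → Matrix (Fin n1) (Fin n2) ℝ) :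
    frobInner X (∑ i ∈ s, f i) = ∑ i ∈ s, frobInner X (f i) := by
  simp [frobInner, Matrix.mul_sum]

lemma frobInner_add_left (A B X : Matrix (Fin n1) (Fin n2) ℝ) :
    frobInner (A + B) X = frobInner A X + frobInner B X := by
  rw [frobInner_comm, frobInner_add_right, frobInner_comm X A, frobInner_comm X B]

lemma frobInner_sub_left (A B X : Matrix (Fin n1) (Fin n2) ℝ) :
    frobInner (A - B) X = frobInner A X - frobInner B X := by
  rw [frobInner_comm, frobInner_sub_right, frobInner_comm X A, frobInner_comm X B]

lemma frobInner_smul_left (c : ℝ) (A X : Matrix (Fin n1) (Fin n2) ℝ) :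
    frobInner (c • A) X = c * frobInner A X := by
  rw [frobInner_comm, frobInner_smul_right, frobInner_comm]

end Aux
noncomputable section Aux2
open Matrix
variable {n1 n2 m r : ℕ}

lemma measOp_add (A : Fin m → Matrix (Fin n1) (Fin n2) ℝ) (X Y : Matrix (Fin n1) (Fin n2) ℝ) :
    measOp A (X + Y) = measOp A X + measOp A Y := by
  funext i; simp [measOp, frobInner_add_right, mul_add]

lemma measOp_smul (A : Fin m → Matrix (Fin n1) (Fin n2) ℝ) (c : ℝ)
    (X : Matrix (Fin n1) (Fin n2) ℝ) : measOp A (c • X) = c • measOp A X := by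
  funext i; simp [measOp, frobInner_smul_right]; ring

lemma measOp_sub (A : Fin m → Matrix (Fin n1) (Fin n2) ℝ) (X Y : Matrix (Fin n1) (Fin n2) ℝ) :
    measOp A (X - Y) = measOp A X - measOp A Y := by
  funext i; simp [measOp, frobInner_sub_right, mul_sub]

lemma frobInner_measAdj (A : Fin m → Matrix (Fin n1) (Fin n2) ℝ) (X : Matrix (Fin n1) (Fin n2) ℝ)
    (u : Fin m → ℝ) : frobInner X (measAdj A u) = ∑ i, u i * measOp A X i := by
  simp only [measAdj, frobInner_smul_right, frobInner_sum_right]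
  rw [Finset.mul_sum]
  refine Finset.sum_congr rfl fun i _ => ?_
  rw [measOp, frobInner_comm]
  ring

lemma frobInner_opAA (A : Fin m → Matrix (Fin n1) (Fin n2) ℝ)
    (X Y : Matrix (Fin n1) (Fin n2) ℝ) :
    frobInner X (opAA A Y) = ∑ i, measOp A X i * measOp A Y i := by
  rw [opAA, frobInner_measAdj]
  exact Finset.sum_congr rfl fun i _ => mul_comm _ _

lemma opAA_add (A : Fin m → Matrix (Fin n1) (Fin n2) ℝ) (X Y : Matrix (Fin n1) (Fin n2) ℝ) :
    opAA A (X + Y) = opAA A X + opAA A Y := by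
  simp only [opAA, measAdj, measOp_add, Pi.add_apply, add_smul, Finset.sum_add_distrib,
    smul_add]

lemma opAA_smul (A : Fin m → Matrix (Fin n1) (Fin n2) ℝ) (c : ℝ)
    (X : Matrix (Fin n1) (Fin n2) ℝ) : opAA A (c • X) = c • opAA A X := by
  simp only [opAA, measAdj, measOp_smul, Pi.smul_apply, smul_eq_mul, mul_smul,
    ← Finset.smul_sum]
  rw [smul_comm]

-- rank lemmas
lemma rank_add_le' (X Y : Matrix (Fin n1) (Fin n2) ℝ) : (X + Y).rank ≤ X.rank + Y.rank := by
  classical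
  rw [Matrix.rank, Matrix.rank, Matrix.rank, Matrix.mulVecLin_add]
  have h : LinearMap.range (X.mulVecLin + Y.mulVecLin) ≤
      LinearMap.range X.mulVecLin ⊔ LinearMap.range Y.mulVecLin := by
    rintro x ⟨y, rfl⟩
    exact Submodule.add_mem_sup ⟨y, rfl⟩ ⟨y, rfl⟩
  exact (Submodule.finrank_mono h).trans (Submodule.finrank_add_le_finrank_add_finrank _ _)

lemma rank_smul_le' (c : ℝ) (X : Matrix (Fin n1) (Fin n2) ℝ) : (c • X).rank ≤ X.rank := by
  have h : c • X = (c • (1 : Matrix (Fin n1) (Fin n1) ℝ)) * X := by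
    rw [Matrix.smul_mul, Matrix.one_mul]
  rw [h]
  exact Matrix.rank_mul_le_right _ _

lemma rank_sub_le' (X Y : Matrix (Fin n1) (Fin n2) ℝ) : (X - Y).rank ≤ X.rank + Y.rank := by
  have h : X - Y = X + (-1 : ℝ) • Y := by simp [sub_eq_add_neg]
  rw [h]
  exact (rank_add_le' _ _).trans (add_le_add le_rfl (rank_smul_le' _ _))

lemma rank_vecMulVec_le (a : Fin n1 → ℝ) (b : Fin n2 → ℝ) :
    (Matrix.vecMulVec a b).rank ≤ 1 := by
  rw [Matrix.vecMulVec_eq (Fin 1)]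
  exact (Matrix.rank_mul_le_right _ _).trans ((Matrix.rank_le_card_height _).trans (by simp))

end Aux2
noncomputable section Aux3
open Matrix
variable {n1 n2 m r : ℕ}

lemma specNorm_nonneg (M : Matrix (Fin n1) (Fin n2) ℝ) : 0 ≤ specNorm M := norm_nonneg _

lemma mulVec_norm_le (M : Matrix (Fin n1) (Fin n2) ℝ) (x : Fin n2 → ℝ) :
    ‖vecE (M *ᵥ x)‖ ≤ specNorm M * ‖vecE x‖ := by
  have h := (LinearMap.toContinuousLinearMap (Matrix.toEuclideanLin M)).le_opNorm (vecE x)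
  simpa [vecE, Matrix.toEuclideanLin_apply_piLp_toLp, specNorm] using h

lemma dotProduct_le_norm (a b : Fin n1 → ℝ) : |a ⬝ᵥ b| ≤ vecNorm a * vecNorm b := by
  have h := abs_real_inner_le_norm (vecE a) (vecE b)
  rw [inner_vecE] at h
  rw [vecNorm_eq, vecNorm_eq]
  simpa [dotProduct] using h

lemma vecNorm_dot (a : Fin n1 → ℝ) : a ⬝ᵥ a = vecNorm a ^ 2 := by
  rw [vecNorm_sq]; simp [dotProduct, pow_two]

/-- key spectral bound : `‖M‖_F ≤ √k ‖M‖` when `rank M ≤ k`. -/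
lemma frobNorm_le_sqrt_rank (M : Matrix (Fin n1) (Fin n2) ℝ) {k : ℕ} (hk : M.rank ≤ k) :
    frobNorm M ≤ Real.sqrt k * specNorm M := by
  classical
  set G := Mᵀ * M with hG
  have hherm : G.IsHermitian := by
    have := Matrix.isHermitian_conjTranspose_mul_self M
    rwa [Matrix.conjTranspose_eq_transpose_of_trivial] at this
  -- trace G = ∑ eigenvalues
  have htr : Matrix.trace G = ∑ i, hherm.eigenvalues i := by
    rw [hherm.trace_eq_sum_eigenvalues]
    simp
  have hfro : frobNorm M ^ 2 = Matrix.trace G := by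
    rw [frobNorm_sq, frobInner]
  -- each eigenvalue ≤ specNorm²
  have heig : ∀ i, hherm.eigenvalues i ≤ specNorm M ^ 2 := by
    intro i
    set x : Fin n2 → ℝ := ⇑(hherm.eigenvectorBasis i) with hx
    have hxnorm : ‖hherm.eigenvectorBasis i‖ = 1 := hherm.eigenvectorBasis.orthonormal.1 i
    have hxx : x ⬝ᵥ x = 1 := by
      have : (inner ℝ (hherm.eigenvectorBasis i) (hherm.eigenvectorBasis i)) = 1 := by
        rw [real_inner_self_eq_norm_sq, hxnorm]; norm_num
      rw [PiLp.inner_apply] at this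
      simpa [dotProduct, RCLike.inner_apply, conj_trivial, pow_two, x] using this
    have h1 : G *ᵥ x = hherm.eigenvalues i • x := hherm.mulVec_eigenvectorBasis i
    have h2 : x ⬝ᵥ (G *ᵥ x) = hherm.eigenvalues i := by
      rw [h1, dotProduct_smul, hxx]; simp
    have h3 : x ⬝ᵥ (G *ᵥ x) = (M *ᵥ x) ⬝ᵥ (M *ᵥ x) := by
      rw [hG, ← Matrix.mulVec_mulVec, Matrix.dotProduct_mulVec, Matrix.vecMul_transpose]
    have h4 : (M *ᵥ x) ⬝ᵥ (M *ᵥ x) ≤ specNorm M ^ 2 := by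
      rw [vecNorm_dot]
      have h5 : vecNorm (M *ᵥ x) ≤ specNorm M := by
        have := mulVec_norm_le M x
        rw [← vecNorm_eq, ← vecNorm_eq] at this
        have hvx : vecNorm x = 1 := by
          have : ‖vecE x‖ = 1 := hxnorm
          rw [vecNorm_eq]; exact this
        simpa [hvx] using this
      exact pow_le_pow_left₀ (vecNorm_nonneg _) h5 2
    rw [← h2, h3]; exact h4
  have hnonneg : ∀ i, 0 ≤ hherm.eigenvalues i := by
    intro i
    have hpsd : G.PosSemidef := by
      have := Matrix.posSemidef_conjTranspose_mul_self M
      rwa [Matrix.conjTranspose_eq_transpose_of_trivial] at this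
    exact hpsd.eigenvalues_nonneg i
  -- count: number of nonzero eigenvalues = rank M ≤ k
  have hcard : (Finset.univ.filter (fun i => hherm.eigenvalues i ≠ 0)).card = M.rank := by
    rw [← Matrix.rank_transpose_mul_self M, ← hG, hherm.rank_eq_card_non_zero_eigs]
    simp [Fintype.card_subtype]
  have hsum : ∑ i, hherm.eigenvalues i ≤ (k : ℝ) * specNorm M ^ 2 := by
    have h1 : ∑ i, hherm.eigenvalues i
        = ∑ i ∈ Finset.univ.filter (fun i => hherm.eigenvalues i ≠ 0), hherm.eigenvalues i := by
      rw [Finset.sum_filter_ne_zero]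
    rw [h1]
    calc ∑ i ∈ Finset.univ.filter (fun i => hherm.eigenvalues i ≠ 0), hherm.eigenvalues i
        ≤ (Finset.univ.filter (fun i => hherm.eigenvalues i ≠ 0)).card • specNorm M ^ 2 :=
          Finset.sum_le_card_nsmul _ _ _ (fun i _ => heig i)
      _ = ((Finset.univ.filter (fun i => hherm.eigenvalues i ≠ 0)).card : ℝ) * specNorm M ^ 2 := by
          rw [nsmul_eq_mul]
      _ ≤ (k : ℝ) * specNorm M ^ 2 := by
          apply mul_le_mul_of_nonneg_right _ (by positivity)
          exact_mod_cast (hcard ▸ hk)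
  have hsq : frobNorm M ^ 2 ≤ (k : ℝ) * specNorm M ^ 2 := by
    rw [hfro, htr]; exact hsum
  calc frobNorm M = Real.sqrt (frobNorm M ^ 2) := by
        rw [Real.sqrt_sq (frobNorm_nonneg M)]
    _ ≤ Real.sqrt ((k : ℝ) * specNorm M ^ 2) := Real.sqrt_le_sqrt hsq
    _ = Real.sqrt k * specNorm M := by
        rw [Real.sqrt_mul (by positivity), Real.sqrt_sq (specNorm_nonneg M)]

end Aux3
noncomputable section Aux4
open Matrix
variable {n1 n2 m r : ℕ}

lemma frobInner_vecMulVec (a c : Fin n1 → ℝ) (b d : Fin n2 → ℝ) :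
    frobInner (Matrix.vecMulVec a b) (Matrix.vecMulVec c d) = (a ⬝ᵥ c) * (b ⬝ᵥ d) := by
  simp only [frobInner_eq_sum, Matrix.vecMulVec_apply, dotProduct, Finset.sum_mul,
    Finset.mul_sum]
  rw [Finset.sum_comm]
  refine Finset.sum_congr rfl fun i _ => Finset.sum_congr rfl fun j _ => by ring

lemma frobInner_vecMulVec_left (a : Fin n1 → ℝ) (b : Fin n2 → ℝ)
    (Z : Matrix (Fin n1) (Fin n2) ℝ) :
    frobInner (Matrix.vecMulVec a b) Z = a ⬝ᵥ (Z *ᵥ b) := by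
  simp only [frobInner_eq_sum, Matrix.vecMulVec_apply, dotProduct, Matrix.mulVec, dotProduct,
    Finset.mul_sum]
  refine Finset.sum_congr rfl fun i _ => Finset.sum_congr rfl fun j _ => by ring

lemma vecMulVec_mul (a : Fin n1 → ℝ) (b : Fin n2 → ℝ) (C : Matrix (Fin n2) (Fin r) ℝ) :
    Matrix.vecMulVec a b * C = Matrix.vecMulVec a (b ᵥ* C) := by
  ext i j
  simp only [Matrix.mul_apply, Matrix.vecMulVec_apply, Matrix.vecMul, dotProduct,
    Finset.mul_sum]
  refine Finset.sum_congr rfl fun k _ => by ring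

lemma mul_vecMulVec (a : Fin n1 → ℝ) (b : Fin n2 → ℝ) (C : Matrix (Fin r) (Fin n1) ℝ) :
    C * Matrix.vecMulVec a b = Matrix.vecMulVec (C *ᵥ a) b := by
  ext i j
  simp only [Matrix.mul_apply, Matrix.vecMulVec_apply, Matrix.mulVec, dotProduct,
    Finset.sum_mul]
  refine Finset.sum_congr rfl fun k _ => by ring

lemma frobNorm_vecMulVec (a : Fin n1 → ℝ) (b : Fin n2 → ℝ) :
    frobNorm (Matrix.vecMulVec a b) = vecNorm a * vecNorm b := by
  have h : frobNorm (Matrix.vecMulVec a b) ^ 2 = (vecNorm a * vecNorm b) ^ 2 := by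
    rw [frobNorm_sq, frobInner_vecMulVec, mul_pow, vecNorm_dot, vecNorm_dot]
  have h1 := frobNorm_nonneg (Matrix.vecMulVec a b)
  have h2 : 0 ≤ vecNorm a * vecNorm b := mul_nonneg (vecNorm_nonneg a) (vecNorm_nonneg b)
  nlinarith [h, h1, h2]

/-- adjoint juggling: `⟨X, Y Cᵀ⟩ = ⟨X C, Y⟩`. -/
lemma frobInner_mul_transpose {k : ℕ} (X : Matrix (Fin n1) (Fin n2) ℝ)
    (Y : Matrix (Fin n1) (Fin k) ℝ) (C : Matrix (Fin n2) (Fin k) ℝ) :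
    frobInner X (Y * Cᵀ) = frobInner (X * C) Y := by
  rw [frobInner, frobInner, Matrix.transpose_mul]
  calc (Xᵀ * (Y * Cᵀ)).trace = ((Xᵀ * Y) * Cᵀ).trace := by rw [Matrix.mul_assoc]
    _ = (Cᵀ * (Xᵀ * Y)).trace := Matrix.trace_mul_comm _ _
    _ = ((Cᵀ * Xᵀ) * Y).trace := by rw [Matrix.mul_assoc]

/-- adjoint juggling: `⟨X, C Y⟩ = ⟨Cᵀ X, Y⟩`. -/
lemma frobInner_transpose_mul {k : ℕ} (X : Matrix (Fin n1) (Fin n2) ℝ)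
    (Y : Matrix (Fin k) (Fin n2) ℝ) (C : Matrix (Fin n1) (Fin k) ℝ) :
    frobInner X (C * Y) = frobInner (Cᵀ * X) Y := by
  rw [frobInner, frobInner, Matrix.transpose_mul, Matrix.transpose_transpose,
    Matrix.mul_assoc]

lemma vecMul_norm_le {n : ℕ} (C : Matrix (Fin n) (Fin r) ℝ) (hC : Cᵀ * C = 1)
    (x : Fin n → ℝ) (hx : vecNorm x = 1) : vecNorm (x ᵥ* C) ≤ 1 := by
  set u := x ᵥ* C with hu
  have hCu : (C *ᵥ u) ⬝ᵥ (C *ᵥ u) = u ⬝ᵥ u := by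
    rw [Matrix.dotProduct_mulVec, ← Matrix.mulVec_transpose, Matrix.mulVec_mulVec, hC,
      Matrix.one_mulVec]
  have huu : u ⬝ᵥ u = x ⬝ᵥ (C *ᵥ u) := by
    rw [Matrix.dotProduct_mulVec]
  have hcs : |x ⬝ᵥ (C *ᵥ u)| ≤ vecNorm x * vecNorm (C *ᵥ u) := dotProduct_le_norm _ _
  have h1 : vecNorm (C *ᵥ u) = vecNorm u := by
    have hsq : vecNorm (C *ᵥ u) ^ 2 = vecNorm u ^ 2 := by
      rw [← vecNorm_dot, ← vecNorm_dot]; exact hCu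
    have := congrArg Real.sqrt hsq
    rwa [Real.sqrt_sq (vecNorm_nonneg _), Real.sqrt_sq (vecNorm_nonneg _)] at this
  have h2 : vecNorm u ^ 2 ≤ vecNorm u := by
    rw [← vecNorm_dot, huu]
    calc x ⬝ᵥ (C *ᵥ u) ≤ |x ⬝ᵥ (C *ᵥ u)| := le_abs_self _
      _ ≤ vecNorm x * vecNorm (C *ᵥ u) := hcs
      _ = vecNorm u := by rw [hx, h1, one_mul]
  nlinarith [vecNorm_nonneg u, sq_nonneg (vecNorm u - 1)]

end Aux4
noncomputable section Aux5
open Matrix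
variable {n1 n2 m r : ℕ}

lemma frobInner_projWVperp_left (w : Fin n1 → ℝ) (v : Fin n2 → ℝ)
    (X Z : Matrix (Fin n1) (Fin n2) ℝ) :
    frobInner (projWVperp w v X) Z = frobInner X (projWVperp w v Z) := by
  rw [projWVperp, projWVperp, projWV, projWV, frobInner_sub_left, frobInner_sub_right,
    frobInner_smul_left, frobInner_smul_right,
    frobInner_comm (Matrix.vecMulVec w v) X]
  ring

lemma projWVperp_sub (w : Fin n1 → ℝ) (v : Fin n2 → ℝ) (X Y : Matrix (Fin n1) (Fin n2) ℝ) :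
    projWVperp w v (X - Y) = projWVperp w v X - projWVperp w v Y := by
  rw [projWVperp, projWVperp, projWVperp, projWV, projWV, projWV, frobInner_sub_right,
    sub_smul]
  abel

lemma frobNorm_projWVperp_le (w : Fin n1 → ℝ) (v : Fin n2 → ℝ)
    (hN : frobInner (Matrix.vecMulVec w v) (Matrix.vecMulVec w v) = 1)
    (M : Matrix (Fin n1) (Fin n2) ℝ) :
    frobNorm (projWVperp w v M) ≤ frobNorm M := by
  set N := Matrix.vecMulVec w v with hNdef
  have hsq : frobNorm (projWVperp w v M) ^ 2 = frobNorm M ^ 2 - frobInner N M ^ 2 := by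
    rw [frobNorm_sq, frobNorm_sq, projWVperp, projWV]
    rw [frobInner_sub_left, frobInner_sub_right, frobInner_sub_right,
      frobInner_smul_left, frobInner_smul_right, frobInner_smul_right,
      frobInner_smul_left, hN, frobInner_comm M N]
    ring
  have h1 : frobNorm (projWVperp w v M) ^ 2 ≤ frobNorm M ^ 2 := by
    rw [hsq]; nlinarith [sq_nonneg (frobInner N M)]
  nlinarith [frobNorm_nonneg (projWVperp w v M), frobNorm_nonneg M]

lemma frobInner_projWVperp_zero (w : Fin n1 → ℝ) (v : Fin n2 → ℝ)
    (hN : frobInner (Matrix.vecMulVec w v) (Matrix.vecMulVec w v) = 1)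
    (M : Matrix (Fin n1) (Fin n2) ℝ) :
    frobInner (Matrix.vecMulVec w v) (projWVperp w v M) = 0 := by
  rw [projWVperp, projWV, frobInner_sub_right, frobInner_smul_right, hN]
  ring

lemma rank_projWVperp_le (w : Fin n1 → ℝ) (v : Fin n2 → ℝ) (M : Matrix (Fin n1) (Fin n2) ℝ) :
    (projWVperp w v M).rank ≤ M.rank + 1 := by
  refine (rank_sub_le' _ _).trans (add_le_add le_rfl ?_)
  exact (rank_smul_le' _ _).trans (_root_.rank_vecMulVec_le _ _)

/-- The key algebraic identity. -/
lemma key_identity (A : Fin m → Matrix (Fin n1) (Fin n2) ℝ) (w : Fin n1 → ℝ) (v : Fin n2 → ℝ)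
    (Z : Matrix (Fin n1) (Fin n2) ℝ) :
    opAA A Z - virtAA A w v Z =
      frobInner (Matrix.vecMulVec w v) Z • (opAA A (Matrix.vecMulVec w v) - Matrix.vecMulVec w v)
      + frobInner (Matrix.vecMulVec w v) (opAA A (projWVperp w v Z)) • Matrix.vecMulVec w v := by
  set N := Matrix.vecMulVec w v with hNdef
  have hvirt : virtAA A w v Z = opAA A (projWVperp w v Z)
      - frobInner N (opAA A (projWVperp w v Z)) • N + frobInner N Z • N := by
    have hlast : virtOp A w v Z (Fin.last m) = frobInner N Z := by
      rw [virtOp, dif_neg (by simp)]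
    have hcast : ∀ i : Fin m, virtOp A w v Z i.castSucc
        = (Real.sqrt m)⁻¹ * frobInner (A i) (projWVperp w v Z) := by
      intro i
      simp only [virtOp, Fin.coe_castSucc]
      rw [dif_pos i.isLt, Fin.eta, frobInner_projWVperp_left]
    rw [virtAA, virtAdj]
    simp only [hcast, hlast]
    have hexp : ∀ (c : ℝ) (X : Matrix (Fin n1) (Fin n2) ℝ),
        c • projWVperp w v X = c • X - (c * frobInner N X) • N := by
      intro c X
      rw [projWVperp, projWV, smul_sub, smul_smul]
    simp only [hexp]
    rw [Finset.sum_sub_distrib, smul_sub, ← Finset.sum_smul]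
    have h1 : (Real.sqrt m)⁻¹ •
        (∑ i : Fin m, ((Real.sqrt m)⁻¹ * frobInner (A i) (projWVperp w v Z)) • A i)
        = opAA A (projWVperp w v Z) := by
      rw [opAA, measAdj]
      rfl
    have h2 : (Real.sqrt m)⁻¹ •
        ((∑ i : Fin m, ((Real.sqrt m)⁻¹ * frobInner (A i) (projWVperp w v Z))
          * frobInner N (A i)) • N)
        = frobInner N (opAA A (projWVperp w v Z)) • N := by
      rw [smul_smul, opAA, frobInner_measAdj]
      congr 1
      rw [Finset.mul_sum]
      refine Finset.sum_congr rfl fun i _ => ?_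
      simp only [measOp]
      rw [frobInner_comm N (A i)]
      ring
    rw [h1, h2]
  have hZsplit : Z - projWVperp w v Z = frobInner N Z • N := by
    rw [projWVperp, projWV]
    abel
  have hop : opAA A Z - opAA A (projWVperp w v Z) = frobInner N Z • opAA A N := by
    have h : opAA A Z = opAA A (projWVperp w v Z) + frobInner N Z • opAA A N := by
      calc opAA A Z = opAA A (projWVperp w v Z + frobInner N Z • N) := by
            have heq : projWVperp w v Z + frobInner N Z • N = Z := by
              rw [← hZsplit]; abel
            rw [heq]
        _ = opAA A (projWVperp w v Z) + opAA A (frobInner N Z • N) := opAA_add _ _ _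
        _ = _ := by rw [opAA_smul]
    rw [h]
    abel
  rw [hvirt]
  rw [show opAA A Z - (opAA A (projWVperp w v Z)
      - frobInner N (opAA A (projWVperp w v Z)) • N + frobInner N Z • N)
    = (opAA A Z - opAA A (projWVperp w v Z))
      + frobInner N (opAA A (projWVperp w v Z)) • N - frobInner N Z • N by abel]
  rw [hop, smul_sub]
  abel

end Aux5
noncomputable section Aux6
open Matrix
variable {n1 n2 m r : ℕ}

lemma vecNorm_add_sq {k : ℕ} (u v : Fin k → ℝ) :
    vecNorm (u + v) ^ 2 = vecNorm u ^ 2 + 2 * (∑ i, u i * v i) + vecNorm v ^ 2 := by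
  simp only [vecNorm_sq, Pi.add_apply]
  rw [Finset.mul_sum, ← Finset.sum_add_distrib, ← Finset.sum_add_distrib]
  exact Finset.sum_congr rfl fun i _ => by ring

lemma vecNorm_sub_sq {k : ℕ} (u v : Fin k → ℝ) :
    vecNorm (u - v) ^ 2 = vecNorm u ^ 2 - 2 * (∑ i, u i * v i) + vecNorm v ^ 2 := by
  simp only [vecNorm_sq, Pi.sub_apply]
  rw [Finset.mul_sum, ← Finset.sum_sub_distrib, ← Finset.sum_add_distrib]
  exact Finset.sum_congr rfl fun i _ => by ring

lemma frobNorm_add_sq (X Y : Matrix (Fin n1) (Fin n2) ℝ) :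
    frobNorm (X + Y) ^ 2 = frobNorm X ^ 2 + 2 * frobInner X Y + frobNorm Y ^ 2 := by
  rw [frobNorm_sq, frobNorm_sq, frobNorm_sq, frobInner_add_left, frobInner_add_right,
    frobInner_add_right, frobInner_comm Y X]
  ring

lemma frobNorm_sub_sq (X Y : Matrix (Fin n1) (Fin n2) ℝ) :
    frobNorm (X - Y) ^ 2 = frobNorm X ^ 2 - 2 * frobInner X Y + frobNorm Y ^ 2 := by
  rw [frobNorm_sq, frobNorm_sq, frobNorm_sq, frobInner_sub_left, frobInner_sub_right,
    frobInner_sub_right, frobInner_comm Y X]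
  ring

lemma vecNorm_measOp_le {k : ℕ} {δ : ℝ} {A : Fin m → Matrix (Fin n1) (Fin n2) ℝ}
    (hRIP : HasRIP A k δ) (hδ : 0 ≤ δ) (X : Matrix (Fin n1) (Fin n2) ℝ) (hX : X.rank ≤ k) :
    vecNorm (measOp A X) ≤ Real.sqrt (1 + δ) * frobNorm X := by
  have h := (hRIP X hX).2
  calc vecNorm (measOp A X) = Real.sqrt (vecNorm (measOp A X) ^ 2) := by
        rw [Real.sqrt_sq (vecNorm_nonneg _)]
    _ ≤ Real.sqrt ((1 + δ) * frobNorm X ^ 2) := Real.sqrt_le_sqrt h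
    _ = Real.sqrt (1 + δ) * frobNorm X := by
        rw [Real.sqrt_mul (by linarith), Real.sqrt_sq (frobNorm_nonneg X)]

lemma rip_cross_half {k : ℕ} {δ : ℝ} {A : Fin m → Matrix (Fin n1) (Fin n2) ℝ}
    (hRIP : HasRIP A k δ) (X Y : Matrix (Fin n1) (Fin n2) ℝ)
    (h1 : (X + Y).rank ≤ k) (h2 : (X - Y).rank ≤ k) :
    |(∑ i, measOp A X i * measOp A Y i) - frobInner X Y|
      ≤ δ / 2 * (frobNorm X ^ 2 + frobNorm Y ^ 2) := by
  obtain ⟨l1, u1⟩ := hRIP _ h1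
  obtain ⟨l2, u2⟩ := hRIP _ h2
  rw [measOp_add, vecNorm_add_sq, frobNorm_add_sq] at l1 u1
  rw [measOp_sub, vecNorm_sub_sq, frobNorm_sub_sq] at l2 u2
  rw [abs_le]
  constructor <;> nlinarith [l1, u1, l2, u2]

/-- RIP cross bound against the unit-Frobenius-norm matrix `N`, with `⟨N, Y⟩ = 0`. -/
lemma rip_cross_orth {k : ℕ} {δ : ℝ} {A : Fin m → Matrix (Fin n1) (Fin n2) ℝ}
    (hRIP : HasRIP A k δ) (hδ : 0 < δ) (N Y : Matrix (Fin n1) (Fin n2) ℝ)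
    (hN : frobNorm N = 1) (horth : frobInner N Y = 0)
    (hrank : N.rank + Y.rank ≤ k) :
    |frobInner N (opAA A Y)| ≤ δ * frobNorm Y := by
  rcases eq_or_ne (frobNorm Y) 0 with h0 | h0
  · have hY : Y = 0 := frobNorm_eq_zero h0
    subst hY
    have : opAA A (0 : Matrix (Fin n1) (Fin n2) ℝ) = 0 := by
      have := opAA_smul A 0 (0 : Matrix (Fin n1) (Fin n2) ℝ)
      simpa using this
    rw [this, h0]
    simp [frobInner]
  · set t := frobNorm Y with ht
    have htpos : 0 < t := lt_of_le_of_ne (frobNorm_nonneg Y) (Ne.symm h0)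
    set Y0 := t⁻¹ • Y with hY0
    have hY0norm : frobNorm Y0 = 1 := by
      rw [hY0, frobNorm_smul, abs_of_pos (by positivity), ← ht, inv_mul_cancel₀ (ne_of_gt htpos)]
    have hranks1 : (N + Y0).rank ≤ k :=
      le_trans (rank_add_le' _ _) (le_trans (add_le_add le_rfl (rank_smul_le' _ _)) hrank)
    have hranks2 : (N - Y0).rank ≤ k :=
      le_trans (rank_sub_le' _ _) (le_trans (add_le_add le_rfl (rank_smul_le' _ _)) hrank)
    have hcross := rip_cross_half hRIP N Y0 hranks1 hranks2
    rw [hN, hY0norm] at hcross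
    have hinner0 : frobInner N Y0 = 0 := by
      rw [hY0, frobInner_smul_right, horth, mul_zero]
    rw [hinner0, sub_zero] at hcross
    have hsum : (∑ i, measOp A N i * measOp A Y0 i) = t⁻¹ * frobInner N (opAA A Y) := by
      rw [hY0, measOp_smul, frobInner_opAA, Finset.mul_sum]
      exact Finset.sum_congr rfl fun i _ => by simp [Pi.smul_apply]; ring
    rw [hsum] at hcross
    have : |t⁻¹ * frobInner N (opAA A Y)| = t⁻¹ * |frobInner N (opAA A Y)| := by
      rw [abs_mul, abs_of_pos (by positivity)]
    rw [this] at hcross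
    have : 0 ≤ δ / 2 * (1^2+1^2) := by positivity
    calc |frobInner N (opAA A Y)| = t * (t⁻¹ * |frobInner N (opAA A Y)|) := by
          field_simp
      _ ≤ t * (δ / 2 * (1 ^ 2 + 1 ^ 2)) := by
          exact mul_le_mul_of_nonneg_left hcross (le_of_lt htpos)
      _ = δ * t := by ring

end Aux6
noncomputable section Aux7
open Matrix
variable {n1 n2 m r : ℕ}

lemma rip_err_core {k : ℕ} {δ : ℝ} {A : Fin m → Matrix (Fin n1) (Fin n2) ℝ}
    (hRIP : HasRIP A k δ) (hδ : 0 < δ) (N : Matrix (Fin n1) (Fin n2) ℝ)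
    (hNfro : frobNorm N = 1) (Ymat : Matrix (Fin n1) (Fin n2) ℝ)
    {t : ℝ} (htnn : 0 ≤ t)
    (hY1 : frobInner (opAA A N - N) Ymat = t ^ 2) (hY2 : frobNorm Ymat = t)
    (hYrank : N.rank + Ymat.rank ≤ k) : t ≤ δ := by
  rcases eq_or_lt_of_le htnn with h0 | htpos
  · linarith
  · set Y0 := t⁻¹ • Ymat with hY0
    have hY0norm : frobNorm Y0 = 1 := by
      rw [hY0, frobNorm_smul, abs_of_pos (by positivity), hY2, inv_mul_cancel₀ (ne_of_gt htpos)]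
    have hranks1 : (N + Y0).rank ≤ k :=
      le_trans (rank_add_le' _ _) (le_trans (add_le_add le_rfl (rank_smul_le' _ _)) hYrank)
    have hranks2 : (N - Y0).rank ≤ k :=
      le_trans (rank_sub_le' _ _) (le_trans (add_le_add le_rfl (rank_smul_le' _ _)) hYrank)
    have hcross := rip_cross_half hRIP N Y0 hranks1 hranks2
    rw [hNfro, hY0norm] at hcross
    have hident : (∑ i, measOp A N i * measOp A Y0 i) - frobInner N Y0
        = frobInner (opAA A N - N) Y0 := by
      rw [frobInner_sub_left, frobInner_comm (opAA A N) Y0, frobInner_opAA]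
      congr 1
      exact Finset.sum_congr rfl fun i _ => mul_comm _ _
    rw [hident] at hcross
    have hval : frobInner (opAA A N - N) Y0 = t := by
      rw [hY0, frobInner_smul_right, hY1]
      field_simp
    rw [hval] at hcross
    calc t = |t| := (abs_of_pos htpos).symm
      _ ≤ δ / 2 * (1 ^ 2 + 1 ^ 2) := hcross
      _ = δ := by ring

lemma rip_err_mul_right {k : ℕ} {δ : ℝ} {A : Fin m → Matrix (Fin n1) (Fin n2) ℝ}
    (hRIP : HasRIP A k δ) (hδ : 0 < δ) (N : Matrix (Fin n1) (Fin n2) ℝ)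
    (hNfro : frobNorm N = 1) (hNrank : N.rank ≤ 1)
    (W : Matrix (Fin n2) (Fin r) ℝ) (hW : Wᵀ * W = 1) (hk : 1 + r ≤ k) :
    frobNorm ((opAA A N - N) * W) ≤ δ := by
  set B := opAA A N - N with hB
  set t := frobNorm (B * W) with ht
  have htnn : 0 ≤ t := frobNorm_nonneg _
  refine rip_err_core hRIP hδ N hNfro (B * W * Wᵀ) htnn ?_ ?_ ?_
  · rw [frobInner_mul_transpose B (B * W) W, ← frobNorm_sq]
  · have h1 : frobNorm (B * W * Wᵀ) ^ 2 = t ^ 2 := by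
      rw [frobNorm_sq, frobInner_mul_transpose (B * W * Wᵀ) (B * W) W,
        Matrix.mul_assoc (B * W) Wᵀ W, hW, Matrix.mul_one, ← frobNorm_sq]
    have := congrArg Real.sqrt h1
    rwa [Real.sqrt_sq (frobNorm_nonneg _), Real.sqrt_sq htnn] at this
  · refine le_trans (add_le_add hNrank ?_) hk
    exact (Matrix.rank_mul_le_right _ _).trans ((Matrix.rank_le_card_height _).trans (by simp))

lemma rip_err_mul_left {k : ℕ} {δ : ℝ} {A : Fin m → Matrix (Fin n1) (Fin n2) ℝ}
    (hRIP : HasRIP A k δ) (hδ : 0 < δ) (N : Matrix (Fin n1) (Fin n2) ℝ)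
    (hNfro : frobNorm N = 1) (hNrank : N.rank ≤ 1)
    (V : Matrix (Fin n1) (Fin r) ℝ) (hV : Vᵀ * V = 1) (hk : 1 + r ≤ k) :
    frobNorm (Vᵀ * (opAA A N - N)) ≤ δ := by
  set B := opAA A N - N with hB
  set t := frobNorm (Vᵀ * B) with ht
  have htnn : 0 ≤ t := frobNorm_nonneg _
  refine rip_err_core hRIP hδ N hNfro (V * (Vᵀ * B)) htnn ?_ ?_ ?_
  · rw [frobInner_transpose_mul B (Vᵀ * B) V, ← frobNorm_sq]
  · have h1 : frobNorm (V * (Vᵀ * B)) ^ 2 = t ^ 2 := by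
      rw [frobNorm_sq, frobInner_transpose_mul (V * (Vᵀ * B)) (Vᵀ * B) V,
        ← Matrix.mul_assoc Vᵀ V (Vᵀ * B), hV, Matrix.one_mul, ← frobNorm_sq]
    have := congrArg Real.sqrt h1
    rwa [Real.sqrt_sq (frobNorm_nonneg _), Real.sqrt_sq htnn] at this
  · refine le_trans (add_le_add hNrank ?_) hk
    exact (Matrix.rank_mul_le_left _ _).trans ((Matrix.rank_le_card_width _).trans (by simp))

end Aux7
set_option maxHeartbeats 1000000
/-- Difference of the true and virtual composite operators applied to
`X⋆ − X_t`, projected onto the singular subspaces of `X'`. -/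
theorem statement15 {n1 n2 m r : ℕ}
    (A : Fin m → Matrix (Fin n1) (Fin n2) ℝ) (δ c' : ℝ)
    (hδ0 : 0 < δ) (hδ1 : δ ≤ 1) (hRIP : HasRIP A (4 * r + 1) δ)
    (w : Fin n1 → ℝ) (v : Fin n2 → ℝ) (hw : vecNorm w = 1) (hv : vecNorm v = 1)
    (hc' : c' = max δ (8 * Real.sqrt (2 * (r : ℝ) * ((n1 : ℝ) + n2) / m)))
    (Xstar Xt X' : Matrix (Fin n1) (Fin n2) ℝ)
    (hXstar : Xstar.rank = r) (hXt : Xt.rank = r)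
    (V' : Matrix (Fin n1) (Fin r) ℝ) (S' : Matrix (Fin r) (Fin r) ℝ)
    (W' : Matrix (Fin n2) (Fin r) ℝ) (hX' : IsCompactSVD X' V' S' W')
    (hdec : |frobInner (Matrix.vecMulVec w v)
        (opAA A (projWVperp w v (Xstar - X')))| ≤
      4 * Real.sqrt (((n1 : ℝ) + n2) / m) *
        vecNorm (measOp A (projWVperp w v (Xstar - X')))) :
    frobNorm ((opAA A (Xstar - Xt) - virtAA A w v (Xstar - Xt)) * W') ≤
      2 * c' * (specNorm (Xstar - Xt) + frobNorm (Xt - X')) ∧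
    frobNorm (V'ᵀ * (opAA A (Xstar - Xt) - virtAA A w v (Xstar - Xt))) ≤
      2 * c' * (specNorm (Xstar - Xt) + frobNorm (Xt - X')) := by
  rcases Nat.eq_zero_or_pos r with hr0 | hrpos
  · subst hr0
    have hc : 0 ≤ c' := by
      rw [hc']; exact le_trans (le_of_lt hδ0) (le_max_left _ _)
    have hrhs : 0 ≤ 2 * c' * (specNorm (Xstar - Xt) + frobNorm (Xt - X')) :=
      mul_nonneg (by linarith) (add_nonneg (specNorm_nonneg _) (frobNorm_nonneg _))
    constructor
    · have h0 : frobNorm ((opAA A (Xstar - Xt) - virtAA A w v (Xstar - Xt)) * W') = 0 := by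
        simp [frobNorm]
      rw [h0]; exact hrhs
    · have h0 : frobNorm (V'ᵀ * (opAA A (Xstar - Xt) - virtAA A w v (Xstar - Xt))) = 0 := by
        simp [frobNorm]
      rw [h0]; exact hrhs
  · obtain ⟨hX'eq, hV'orth, hW'orth, hS'diag, hS'pos⟩ := hX'
    set N := Matrix.vecMulVec w v with hNdef
    have hNfro : frobNorm N = 1 := by
      rw [hNdef, frobNorm_vecMulVec, hw, hv, one_mul]
    have hNN : frobInner N N = 1 := by
      rw [← frobNorm_sq, hNfro]; norm_num
    have hNrank : N.rank ≤ 1 := _root_.rank_vecMulVec_le w v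
    set Z := Xstar - Xt with hZ
    have hZrank : Z.rank ≤ 2 * r := by
      have h := rank_sub_le' Xstar Xt
      rw [hXstar, hXt] at h
      rw [hZ]
      omega
    have hX'rank : X'.rank ≤ r := by
      rw [hX'eq]
      exact (Matrix.rank_mul_le_left _ _).trans ((Matrix.rank_mul_le_left _ _).trans
        ((Matrix.rank_le_card_width V').trans (by simp)))
    set α := frobInner N Z with hαdef
    set β1 := frobInner N (opAA A (projWVperp w v (Xstar - X'))) with hβ1def
    set β2 := frobInner N (opAA A (projWVperp w v (X' - Xt))) with hβ2def
    have hkey : opAA A Z - virtAA A w v Z = α • (opAA A N - N) + (β1 + β2) • N := by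
      rw [key_identity A w v Z]
      have hsplit : projWVperp w v Z = projWVperp w v (Xstar - X') + projWVperp w v (X' - Xt) := by
        rw [hZ, projWVperp_sub, projWVperp_sub, projWVperp_sub]
        abel
      rw [hsplit, opAA_add, frobInner_add_right]
    set σ := specNorm Z with hσdef
    set F := frobNorm (Xt - X') with hFdef
    have hσnn : 0 ≤ σ := specNorm_nonneg _
    have hFnn : 0 ≤ F := frobNorm_nonneg _
    -- |α| ≤ σ
    have hαbound : |α| ≤ σ := by
      rw [hαdef, hNdef, frobInner_vecMulVec_left]
      have h1 : vecNorm (Z *ᵥ v) ≤ σ := by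
        have h := mulVec_norm_le Z v
        rw [← vecNorm_eq, ← vecNorm_eq, hv, mul_one] at h
        exact h
      calc |w ⬝ᵥ (Z *ᵥ v)| ≤ vecNorm w * vecNorm (Z *ᵥ v) := dotProduct_le_norm _ _
        _ ≤ 1 * σ := by rw [hw]; exact mul_le_mul_of_nonneg_left h1 (by norm_num)
        _ = σ := one_mul σ
    -- error operator bounds
    have hkrank : 1 + r ≤ 4 * r + 1 := by omega
    have hBW : frobNorm ((opAA A N - N) * W') ≤ δ :=
      rip_err_mul_right hRIP hδ0 N hNfro hNrank W' hW'orth hkrank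
    have hVB : frobNorm (V'ᵀ * (opAA A N - N)) ≤ δ :=
      rip_err_mul_left hRIP hδ0 N hNfro hNrank V' hV'orth hkrank
    have hNW : frobNorm (N * W') ≤ 1 := by
      rw [hNdef, _root_.vecMulVec_mul, frobNorm_vecMulVec, hw, one_mul]
      exact vecMul_norm_le W' hW'orth v hv
    have hVN : frobNorm (V'ᵀ * N) ≤ 1 := by
      rw [hNdef, _root_.mul_vecMulVec, frobNorm_vecMulVec, hv, mul_one, Matrix.mulVec_transpose]
      exact vecMul_norm_le V' hV'orth w hw
    -- β1 bound
    have hPrank1 : (projWVperp w v (Xstar - X')).rank ≤ 4 * r + 1 := by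
      have h1 := rank_projWVperp_le w v (Xstar - X')
      have h2 := rank_sub_le' Xstar X'
      rw [hXstar] at h2
      omega
    have hβ1a : |β1| ≤ 4 * Real.sqrt (((n1 : ℝ) + n2) / m) *
        (Real.sqrt (1 + δ) * frobNorm (projWVperp w v (Xstar - X'))) := by
      refine le_trans hdec ?_
      exact mul_le_mul_of_nonneg_left
        (vecNorm_measOp_le hRIP (le_of_lt hδ0) _ hPrank1) (by positivity)
    have hchain : frobNorm (projWVperp w v (Xstar - X')) ≤ Real.sqrt (2 * (r : ℝ)) * σ + F := by
      refine le_trans (frobNorm_projWVperp_le w v hNN _) ?_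
      have hdecomp : Xstar - X' = Z + (Xt - X') := by rw [hZ]; abel
      refine le_trans (hdecomp ▸ frobNorm_triangle Z (Xt - X')) ?_
      have hZF : frobNorm Z ≤ Real.sqrt (2 * (r : ℝ)) * σ := by
        have h := frobNorm_le_sqrt_rank Z hZrank
        rw [show (((2 * r : ℕ) : ℝ)) = 2 * (r : ℝ) by push_cast; ring] at h
        exact h
      exact add_le_add hZF le_rfl
    -- β2 bound
    have hPrank2 : N.rank + (projWVperp w v (X' - Xt)).rank ≤ 4 * r + 1 := by
      have h1 := rank_projWVperp_le w v (X' - Xt)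
      have h2 := rank_sub_le' X' Xt
      rw [hXt] at h2
      omega
    have hβ2bound : |β2| ≤ δ * F := by
      refine le_trans (rip_cross_orth hRIP hδ0 N _ hNfro
        (frobInner_projWVperp_zero w v hNN _) hPrank2) ?_
      have h1 : frobNorm (projWVperp w v (X' - Xt)) ≤ F := by
        refine le_trans (frobNorm_projWVperp_le w v hNN _) ?_
        rw [show X' - Xt = -(Xt - X') by abel, frobNorm_neg, hFdef]
      exact mul_le_mul_of_nonneg_left h1 (le_of_lt hδ0)
    -- constants
    set t := Real.sqrt (((n1 : ℝ) + n2) / m) with htdef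
    set s2r := Real.sqrt (2 * (r : ℝ)) with hs2rdef
    have htnn : 0 ≤ t := Real.sqrt_nonneg _
    have hs2rnn : 0 ≤ s2r := Real.sqrt_nonneg _
    have hs2r1 : 1 ≤ s2r := by
      rw [hs2rdef, show (1:ℝ) = Real.sqrt 1 by rw [Real.sqrt_one]]
      refine Real.sqrt_le_sqrt ?_
      have : (1 : ℝ) ≤ (r : ℝ) := by exact_mod_cast hrpos
      linarith
    have hc'1 : δ ≤ c' := by rw [hc']; exact le_max_left _ _
    have hc'2 : 8 * s2r * t ≤ c' := by
      rw [hc']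
      refine le_trans (le_of_eq ?_) (le_max_right _ _)
      rw [hs2rdef, htdef, mul_assoc, ← Real.sqrt_mul (by positivity)]
      congr 1
      ring
    have hsd : Real.sqrt (1 + δ) ≤ 2 := by
      rw [show (2:ℝ) = Real.sqrt 4 by
        rw [show (4:ℝ) = 2 ^ 2 by norm_num, Real.sqrt_sq (by norm_num)]]
      exact Real.sqrt_le_sqrt (by linarith)
    have hsdnn : 0 ≤ Real.sqrt (1 + δ) := Real.sqrt_nonneg _
    have hc'nn : 0 ≤ c' := le_trans (le_of_lt hδ0) hc'1
    have h8t : 8 * t ≤ c' := by nlinarith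
    clear_value N Z α β1 β2 σ F t s2r
    -- β1 final
    have hβ1bound : |β1| ≤ c' * σ + c' * F := by
      have hstep1 : |β1| ≤ 4 * t * (Real.sqrt (1 + δ) * (s2r * σ + F)) := by
        refine le_trans hβ1a ?_
        refine mul_le_mul_of_nonneg_left ?_ (by positivity)
        exact mul_le_mul_of_nonneg_left hchain hsdnn
      refine le_trans hstep1 ?_
      have hP : 0 ≤ s2r * σ + F := by positivity
      have hstep2 : 4 * t * (Real.sqrt (1 + δ) * (s2r * σ + F)) ≤ 4 * t * (2 * (s2r * σ + F)) := by
        refine mul_le_mul_of_nonneg_left ?_ (by positivity)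
        exact mul_le_mul_of_nonneg_right hsd hP
      refine le_trans hstep2 ?_
      have e1 : 4 * t * (2 * (s2r * σ + F)) = (8 * s2r * t) * σ + (8 * t) * F := by ring
      rw [e1]
      exact add_le_add (mul_le_mul_of_nonneg_right hc'2 hσnn)
        (mul_le_mul_of_nonneg_right h8t hFnn)
    have hβbound : |β1 + β2| ≤ c' * σ + c' * F + c' * F := by
      refine le_trans (abs_add_le _ _) ?_
      refine add_le_add hβ1bound (le_trans hβ2bound ?_)
      exact mul_le_mul_of_nonneg_right hc'1 hFnn
    have hαδ : |α| * δ ≤ c' * σ := by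
      calc |α| * δ ≤ σ * δ := mul_le_mul_of_nonneg_right hαbound (le_of_lt hδ0)
        _ ≤ σ * c' := mul_le_mul_of_nonneg_left hc'1 hσnn
        _ = c' * σ := mul_comm _ _
    have habs_nonneg : 0 ≤ |α| := abs_nonneg _
    have hβabs_nonneg : 0 ≤ |β1 + β2| := abs_nonneg _
    constructor
    · have hDW : (opAA A Z - virtAA A w v Z) * W'
          = α • ((opAA A N - N) * W') + (β1 + β2) • (N * W') := by
        rw [hkey, Matrix.add_mul, Matrix.smul_mul, Matrix.smul_mul]
      calc frobNorm ((opAA A Z - virtAA A w v Z) * W')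
          ≤ |α| * frobNorm ((opAA A N - N) * W') + |β1 + β2| * frobNorm (N * W') := by
            rw [hDW]
            refine le_trans (frobNorm_triangle _ _) ?_
            rw [frobNorm_smul, frobNorm_smul]
        _ ≤ |α| * δ + |β1 + β2| * 1 := by
            exact add_le_add (mul_le_mul_of_nonneg_left hBW habs_nonneg)
              (mul_le_mul_of_nonneg_left hNW hβabs_nonneg)
        _ ≤ c' * σ + (c' * σ + c' * F + c' * F) := by
            rw [mul_one]
            exact add_le_add hαδ hβbound
        _ ≤ 2 * c' * (σ + F) := by linarith
    · have hDV : V'ᵀ * (opAA A Z - virtAA A w v Z)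
          = α • (V'ᵀ * (opAA A N - N)) + (β1 + β2) • (V'ᵀ * N) := by
        rw [hkey, Matrix.mul_add, Matrix.mul_smul, Matrix.mul_smul]
      calc frobNorm (V'ᵀ * (opAA A Z - virtAA A w v Z))
          ≤ |α| * frobNorm (V'ᵀ * (opAA A N - N)) + |β1 + β2| * frobNorm (V'ᵀ * N) := by
            rw [hDV]
            refine le_trans (frobNorm_triangle _ _) ?_
            rw [frobNorm_smul, frobNorm_smul]
        _ ≤ |α| * δ + |β1 + β2| * 1 := by
            exact add_le_add (mul_le_mul_of_nonneg_left hVB habs_nonneg)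
              (mul_le_mul_of_nonneg_left hVN hβabs_nonneg)
        _ ≤ c' * σ + (c' * σ + c' * F + c' * F) := by
            rw [mul_one]
            exact add_le_add hαδ hβbound
        _ ≤ 2 * c' * (σ + F) := by linarith
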